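/- Let l ≥ 1 be an integer, let L ∈ ℝ^{l×l} be symmetric positive definite, let β > 0 and p ∈ (1,2), and define B(e) = ((eᵀLe)^{1−1/p} − β)/((eᵀLe)^{1−1/p} + β) for e ∈ ℝ^l. If a sequence (e_k)_{k∈ℕ} in ℝ^l satisfies e_{k+1} = B(e_k)·e_k for all k, then the sequence k ↦ e_kᵀ L e_k is non-increasing, it is strictly decreasing at every k for which e_k ≠ 0, and e_k → 0 as k → ∞. -/

import Mathlib

open Matrix

/-- The observer gain function B of Theorem 1. -/
noncomputable def Bfun (l : ℕ) (L : Matrix (Fin l) (Fin l) ℝ) (β p : ℝ)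
    (e : Fin l → ℝ) : ℝ :=
  ((e ⬝ᵥ L.mulVec e) ^ (1 - 1 / p) - β) / ((e ⬝ᵥ L.mulVec e) ^ (1 - 1 / p) + β)

private lemma quad_smul (l : ℕ) (L : Matrix (Fin l) (Fin l) ℝ) (c : ℝ) (x : Fin l → ℝ) :
    (c • x) ⬝ᵥ L.mulVec (c • x) = c ^ 2 * (x ⬝ᵥ L.mulVec x) := by
  rw [Matrix.mulVec_smul, smul_dotProduct, dotProduct_smul, smul_eq_mul, smul_eq_mul]
  ring

private lemma quad_cont (l : ℕ) (L : Matrix (Fin l) (Fin l) ℝ) :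
    Continuous (fun x : Fin l → ℝ => x ⬝ᵥ L.mulVec x) :=
  continuous_id.dotProduct (continuous_const.matrix_mulVec continuous_id)

/-- Theorem 1 (stability/convergence content): the observer error recursion
e_{k+1} = B(e_k) e_k makes eᵀLe non-increasing, strictly decreasing off 0,
and drives e_k → 0. -/
theorem stmt_3 (l : ℕ) (hl : 1 ≤ l) (L : Matrix (Fin l) (Fin l) ℝ)
    (hLsymm : L.IsSymm) (hL : L.PosDef)
    (β p : ℝ) (hβ : 0 < β) (hp : p ∈ Set.Ioo (1:ℝ) 2)
    (e : ℕ → Fin l → ℝ)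
    (hrec : ∀ k, e (k + 1) = Bfun l L β p (e k) • e k) :
    (∀ k, e (k + 1) ⬝ᵥ L.mulVec (e (k + 1)) ≤ e k ⬝ᵥ L.mulVec (e k)) ∧
    (∀ k, e k ≠ 0 → e (k + 1) ⬝ᵥ L.mulVec (e (k + 1)) < e k ⬝ᵥ L.mulVec (e k)) ∧
    Filter.Tendsto e Filter.atTop (nhds 0) := by
  obtain ⟨hp1, hp2⟩ := hp
  set V : ℕ → ℝ := fun k => e k ⬝ᵥ L.mulVec (e k) with hV
  -- basic positivity facts
  have hVnn : ∀ x : Fin l → ℝ, 0 ≤ x ⬝ᵥ L.mulVec x := by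
    intro x
    simpa using hL.posSemidef.dotProduct_mulVec_nonneg x
  have hVpos : ∀ x : Fin l → ℝ, x ≠ 0 → 0 < x ⬝ᵥ L.mulVec x := by
    intro x hx
    simpa using hL.dotProduct_mulVec_pos hx
  have hexp : (0:ℝ) < 1 - 1 / p := by
    have : 1 / p < 1 := by
      rw [div_lt_one (by linarith)]; linarith
    linarith
  -- the step relation for V
  have hstep : ∀ k, V (k + 1) = (Bfun l L β p (e k)) ^ 2 * V k := by
    intro k
    simp only [hV]
    rw [hrec k, quad_smul]
  -- bound on B
  have hBle : ∀ x : Fin l → ℝ, (Bfun l L β p x) ^ 2 ≤ 1 := by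
    intro x
    have hx : (0:ℝ) ≤ (x ⬝ᵥ L.mulVec x) ^ (1 - 1 / p) := Real.rpow_nonneg (hVnn x) _
    set t := (x ⬝ᵥ L.mulVec x) ^ (1 - 1 / p)
    have hden : 0 < t + β := by linarith
    rw [Bfun, div_pow, div_le_one (by positivity)]
    nlinarith
  have hBlt : ∀ x : Fin l → ℝ, x ≠ 0 → (Bfun l L β p x) ^ 2 < 1 := by
    intro x hx
    have hx' : (0:ℝ) < (x ⬝ᵥ L.mulVec x) ^ (1 - 1 / p) :=
      Real.rpow_pos_of_pos (hVpos x hx) _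
    set t := (x ⬝ᵥ L.mulVec x) ^ (1 - 1 / p)
    have hden : 0 < t + β := by linarith
    rw [Bfun, div_pow, div_lt_one (by positivity)]
    nlinarith
  have hmono : ∀ k, V (k + 1) ≤ V k := by
    intro k
    rw [hstep k]
    calc (Bfun l L β p (e k)) ^ 2 * V k ≤ 1 * V k :=
          mul_le_mul_of_nonneg_right (hBle _) (hVnn _)
      _ = V k := one_mul _
  have hstrict : ∀ k, e k ≠ 0 → V (k + 1) < V k := by
    intro k hk
    rw [hstep k]
    calc (Bfun l L β p (e k)) ^ 2 * V k < 1 * V k :=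
          mul_lt_mul_of_pos_right (hBlt _ hk) (hVpos _ hk)
      _ = V k := one_mul _
  refine ⟨hmono, hstrict, ?_⟩
  -- V is antitone and bounded below, so it converges to its infimum a
  have hanti : Antitone V := antitone_nat_of_succ_le hmono
  have hbdd : BddBelow (Set.range V) := ⟨0, by rintro _ ⟨k, rfl⟩; exact hVnn _⟩
  set a := ⨅ k, V k with ha
  have hVa : Filter.Tendsto V Filter.atTop (nhds a) :=
    tendsto_atTop_ciInf hanti hbdd
  have haV : ∀ k, a ≤ V k := fun k => ciInf_le hbdd k
  have ha0 : 0 ≤ a := le_ciInf fun k => hVnn _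
  -- Claim: a = 0
  have haz : a = 0 := by
    by_contra h
    have hapos : 0 < a := lt_of_le_of_ne ha0 (Ne.symm h)
    -- uniform contraction bound
    obtain ⟨A, hA⟩ : ∃ A : ℝ, A = a ^ (1 - 1 / p) := ⟨_, rfl⟩
    obtain ⟨Bd, hBd⟩ : ∃ Bd : ℝ, Bd = (V 0) ^ (1 - 1 / p) := ⟨_, rfl⟩
    have hApos : 0 < A := hA ▸ Real.rpow_pos_of_pos hapos _
    have hABd : ∀ k, A ≤ (V k) ^ (1 - 1/p) ∧ (V k) ^ (1 - 1/p) ≤ Bd := by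
      intro k
      rw [hA, hBd]
      constructor
      · exact Real.rpow_le_rpow (le_of_lt hapos) (haV k) (le_of_lt hexp)
      · exact Real.rpow_le_rpow (hVnn _) (hanti (Nat.zero_le k)) (le_of_lt hexp)
    have hABle : A ≤ Bd := le_trans (hABd 0).1 (hABd 0).2
    obtain ⟨c, hc⟩ : ∃ c : ℝ, c = 1 - 4 * β * A / (Bd + β) ^ 2 := ⟨_, rfl⟩
    have hBdβ : 0 < Bd + β := by linarith
    have hc1 : c < 1 := by
      have h4 : 0 < 4 * β * A / (Bd + β) ^ 2 := by positivity
      rw [hc]; linarith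
    have hc0 : 0 ≤ c := by
      rw [hc, sub_nonneg, div_le_one (by positivity)]
      nlinarith [sq_nonneg (Bd - β), hABle, hApos, hβ]
    -- each step contracts by c
    have hcontr : ∀ k, V (k + 1) ≤ c * V k := by
      intro k
      rw [hstep k]
      have hVk : 0 ≤ V k := hVnn _
      refine mul_le_mul_of_nonneg_right ?_ hVk
      set t := (e k ⬝ᵥ L.mulVec (e k)) ^ (1 - 1 / p) with ht
      have htA : A ≤ t := (hABd k).1
      have htB : t ≤ Bd := (hABd k).2
      have htpos : 0 < t := lt_of_lt_of_le hApos htA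
      have hden : 0 < t + β := by linarith
      rw [Bfun, div_pow, div_le_iff₀ (by positivity)]
      have key : 4 * β * A / (Bd + β) ^ 2 ≤ 4 * β * t / (t + β) ^ 2 := by
        rw [div_le_div_iff₀ (by positivity) (by positivity)]
        have hsq : (t + β) ^ 2 ≤ (Bd + β) ^ 2 := by nlinarith
        nlinarith [mul_le_mul_of_nonneg_left hsq (show (0:ℝ) ≤ 4 * β * A by positivity),
          mul_le_mul_of_nonneg_right htA (show (0:ℝ) ≤ 4 * β * (Bd + β)^2 by positivity)]
      have expand : c * (t + β) ^ 2 = (t + β)^2 - (4 * β * A / (Bd + β) ^ 2) * (t+β)^2 := by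
        rw [hc]; ring
      have hkey2 : (4 * β * A / (Bd + β) ^ 2) * (t+β)^2 ≤ 4 * β * t := by
        have h5 := mul_le_mul_of_nonneg_right key (le_of_lt (show (0:ℝ) < (t+β)^2 by positivity))
        calc (4 * β * A / (Bd + β) ^ 2) * (t+β)^2 ≤ (4 * β * t / (t + β) ^ 2) * (t+β)^2 := h5
          _ = 4 * β * t := by field_simp
      have id1 : (t - β)^2 = (t + β)^2 - 4*β*t := by ring
      linarith
    -- geometric decay
    have hgeo : ∀ k, V k ≤ c ^ k * V 0 := by
      intro k
      induction k with
      | zero => simp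
      | succ n ih =>
        calc V (n + 1) ≤ c * V n := hcontr n
          _ ≤ c * (c ^ n * V 0) := mul_le_mul_of_nonneg_left ih hc0
          _ = c ^ (n + 1) * V 0 := by ring
    have hto0 : Filter.Tendsto (fun k => c ^ k * V 0) Filter.atTop (nhds 0) := by
      have := tendsto_pow_atTop_nhds_zero_of_lt_one hc0 hc1
      simpa using this.mul_const (V 0)
    have : Filter.Tendsto V Filter.atTop (nhds 0) :=
      squeeze_zero (fun k => hVnn _) hgeo hto0
    have : a = 0 := tendsto_nhds_unique hVa this
    exact h this
  rw [haz] at hVa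
  -- lower bound for quadratic form: V(x) ≥ m ‖x‖²
  haveI : Nonempty (Fin l) := ⟨⟨0, hl⟩⟩
  have hsph : (Metric.sphere (0 : Fin l → ℝ) 1).Nonempty := by
    haveI : Nontrivial (Fin l → ℝ) := by
      refine ⟨0, fun _ => 1, ?_⟩
      intro hcon
      have := congrFun hcon ⟨0, hl⟩
      simp at this
    exact NormedSpace.sphere_nonempty.mpr zero_le_one
  obtain ⟨x₀, hx₀s, hx₀min⟩ :=
    (isCompact_sphere (0 : Fin l → ℝ) 1).exists_isMinOn hsph
      ((quad_cont l L).continuousOn)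
  set m := x₀ ⬝ᵥ L.mulVec x₀ with hm
  have hx₀ne : x₀ ≠ 0 := by
    intro hcon
    rw [hcon] at hx₀s
    simp at hx₀s
  have hmpos : 0 < m := hVpos x₀ hx₀ne
  have hlow : ∀ x : Fin l → ℝ, m * ‖x‖ ^ 2 ≤ x ⬝ᵥ L.mulVec x := by
    intro x
    rcases eq_or_ne x 0 with rfl | hx
    · simp [hVnn]
    · have hnx : 0 < ‖x‖ := norm_pos_iff.mpr hx
      set u := ‖x‖⁻¹ • x with hu
      have hus : u ∈ Metric.sphere (0 : Fin l → ℝ) 1 := by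
        simp [hu, norm_smul, abs_of_pos (inv_pos.mpr hnx), inv_mul_cancel₀ (ne_of_gt hnx)]
      have := isMinOn_iff.mp hx₀min u hus
      have hux : u ⬝ᵥ L.mulVec u = (‖x‖⁻¹) ^ 2 * (x ⬝ᵥ L.mulVec x) := quad_smul l L _ x
      rw [hux] at this
      have h2 : m * ‖x‖ ^ 2 ≤ (‖x‖⁻¹) ^ 2 * (x ⬝ᵥ L.mulVec x) * ‖x‖ ^ 2 :=
        mul_le_mul_of_nonneg_right this (by positivity)
      calc m * ‖x‖ ^ 2 ≤ (‖x‖⁻¹) ^ 2 * (x ⬝ᵥ L.mulVec x) * ‖x‖ ^ 2 := h2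
        _ = x ⬝ᵥ L.mulVec x := by field_simp
  -- squeeze: ‖e k‖ → 0
  have hnorm : Filter.Tendsto (fun k => ‖e k‖) Filter.atTop (nhds 0) := by
    have hsq : ∀ k, ‖e k‖ ≤ Real.sqrt (V k / m) := by
      intro k
      have h1 : ‖e k‖ ^ 2 ≤ V k / m := by
        rw [le_div_iff₀ hmpos]
        have := hlow (e k)
        linarith [hlow (e k)]
      have := Real.sqrt_le_sqrt h1
      rwa [Real.sqrt_sq (norm_nonneg _)] at this
    have hsqrt0 : Filter.Tendsto (fun k => Real.sqrt (V k / m)) Filter.atTop (nhds 0) := by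
      have hdiv : Filter.Tendsto (fun k => V k / m) Filter.atTop (nhds 0) := by
        simpa using hVa.div_const m
      have := (Real.continuous_sqrt.tendsto 0).comp hdiv
      simpa [Function.comp_def] using this
    exact squeeze_zero (fun k => norm_nonneg _) hsq hsqrt0
  simpa using tendsto_zero_iff_norm_tendsto_zero.mpr hnorm
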